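/- For λ < 0, the skew normal cdf satisfies F(z) ~ √(2/π) |z|^{-1} e^{-z²/2} as z → -∞; that is, the left tail is asymptotically twice the standard normal left tail. -/

import Mathlib

open Real MeasureTheory Filter Set

noncomputable def stdNormalPdf (t : ℝ) : ℝ := (Real.sqrt (2 * π))⁻¹ * Real.exp (-t ^ 2 / 2)

noncomputable def stdNormalCdf (z : ℝ) : ℝ := ∫ t in Set.Iic z, stdNormalPdf t

noncomputable def skewNormalCdf (l z : ℝ) : ℝ :=
  ∫ t in Set.Iic z, 2 * stdNormalPdf t * stdNormalCdf (l * t)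

lemma pdf_def' (t : ℝ) : stdNormalPdf t = (Real.sqrt (2 * π))⁻¹ * Real.exp (-t ^ 2 / 2) := rfl

lemma cdf_def (z : ℝ) : stdNormalCdf z = ∫ t in Set.Iic z, stdNormalPdf t := rfl


lemma pdf_pos (t : ℝ) : 0 < stdNormalPdf t := by
  unfold stdNormalPdf
  positivity

lemma pdf_even (t : ℝ) : stdNormalPdf (-t) = stdNormalPdf t := by
  simp [stdNormalPdf]

lemma pdf_cont : Continuous stdNormalPdf := by
  unfold stdNormalPdf
  continuity

lemma pdf_integrable : Integrable stdNormalPdf := by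
  have h := (integrable_exp_neg_mul_sq (by norm_num : (0:ℝ) < 1/2)).const_mul ((Real.sqrt (2 * π))⁻¹)
  convert h using 2 with t
  unfold stdNormalPdf
  ring_nf

lemma pdf_integral : ∫ t, stdNormalPdf t = 1 := by
  unfold stdNormalPdf
  rw [MeasureTheory.integral_const_mul]
  have : ∀ t : ℝ, Real.exp (-t ^ 2 / 2) = Real.exp (-(1/2) * t ^ 2) := by intro t; ring_nf
  simp_rw [this, integral_gaussian]
  rw [inv_mul_eq_one₀]
  · rw [show π / (1/2) = 2 * π by ring]
  · positivity

lemma cdf_mono : Monotone stdNormalCdf := by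
  intro a b hab
  exact setIntegral_mono_set pdf_integrable.integrableOn
    (Filter.Eventually.of_forall fun t => (pdf_pos t).le) (Iic_subset_Iic.2 hab).eventuallyLE

lemma cdf_nonneg (z : ℝ) : 0 ≤ stdNormalCdf z :=
  setIntegral_nonneg measurableSet_Iic fun t _ => (pdf_pos t).le

lemma cdf_le_one (z : ℝ) : stdNormalCdf z ≤ 1 := by
  rw [← pdf_integral]
  exact setIntegral_le_integral pdf_integrable (Filter.Eventually.of_forall fun t => (pdf_pos t).le)

lemma cdf_eq (z : ℝ) : stdNormalCdf z = stdNormalCdf 0 + ∫ t in (0:ℝ)..z, stdNormalPdf t := by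
  have h := intervalIntegral.integral_Iic_sub_Iic (f := stdNormalPdf) (μ := volume)
    pdf_integrable.integrableOn pdf_integrable.integrableOn (a := 0) (b := z)
  unfold stdNormalCdf
  linarith

lemma cdf_hasDeriv (z : ℝ) : HasDerivAt stdNormalCdf (stdNormalPdf z) z := by
  have : stdNormalCdf = fun z => stdNormalCdf 0 + ∫ t in (0:ℝ)..z, stdNormalPdf t := funext cdf_eq
  rw [this]
  exact (intervalIntegral.integral_hasDerivAt_right
    pdf_integrable.intervalIntegrable
    (pdf_cont.stronglyMeasurableAtFilter _ _) pdf_cont.continuousAt).const_add _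


lemma pdf_le_exp {t : ℝ} (ht : t ≤ -2) : stdNormalPdf t ≤ Real.exp t := by
  rw [pdf_def']
  have h1 : -t ^ 2 / 2 ≤ t := by nlinarith
  have h2 : (Real.sqrt (2 * π))⁻¹ ≤ 1 := by
    rw [inv_le_one_iff₀]
    right
    rw [show (1:ℝ) = Real.sqrt 1 by simp]
    apply Real.sqrt_le_sqrt
    nlinarith [pi_gt_three]
  calc (Real.sqrt (2 * π))⁻¹ * Real.exp (-t ^ 2 / 2) ≤ 1 * Real.exp t := by
        apply mul_le_mul h2 (Real.exp_le_exp.2 h1) (Real.exp_pos _).le zero_le_one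
    _ = Real.exp t := one_mul _

lemma cdf_le_exp {z : ℝ} (hz : z ≤ -2) : stdNormalCdf z ≤ Real.exp z := by
  rw [cdf_def, ← integral_exp_Iic z]
  apply setIntegral_mono_on pdf_integrable.integrableOn
    (integrableOn_exp_Iic z) measurableSet_Iic
  intro t ht
  exact pdf_le_exp (le_trans ht hz)

lemma cdf_tendsto_bot : Tendsto stdNormalCdf atBot (nhds 0) := by
  apply tendsto_of_tendsto_of_tendsto_of_le_of_le' tendsto_const_nhds
    Real.tendsto_exp_atBot
  · exact Eventually.of_forall cdf_nonneg
  · filter_upwards [eventually_le_atBot (-2 : ℝ)] with z hz using cdf_le_exp hz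

lemma tail_formula (z : ℝ) : stdNormalCdf z = 1 - ∫ t in Set.Ioi z, stdNormalPdf t := by
  have h := intervalIntegral.integral_Iic_add_Ioi (μ := volume) (b := z)
    pdf_integrable.integrableOn pdf_integrable.integrableOn
  rw [cdf_def]
  rw [pdf_integral] at h
  linarith

lemma tail_le_exp {z : ℝ} (hz : 2 ≤ z) : (∫ t in Set.Ioi z, stdNormalPdf t) ≤ Real.exp (-z) := by
  have : (∫ t in Set.Ioi z, stdNormalPdf t) ≤ ∫ t in Set.Ioi z, Real.exp (-t) := by
    have hint : IntegrableOn (fun t => Real.exp (-t)) (Ioi z) := by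
      have := exp_neg_integrableOn_Ioi z (by norm_num : (0:ℝ) < 1)
      simpa using this
    apply setIntegral_mono_on pdf_integrable.integrableOn hint measurableSet_Ioi
    intro t ht
    have : -t ≤ -2 := by linarith [le_of_lt (mem_Ioi.mp ht)]
    calc stdNormalPdf t = stdNormalPdf (-t) := (pdf_even t).symm
      _ ≤ Real.exp (-t) := pdf_le_exp this
  rwa [integral_exp_neg_Ioi] at this

lemma cdf_tendsto_top : Tendsto stdNormalCdf atTop (nhds 1) := by
  have h1 : Tendsto (fun z => 1 - Real.exp (-z)) atTop (nhds 1) := by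
    have := Real.tendsto_exp_neg_atTop_nhds_zero
    have h := tendsto_const_nhds (x := (1:ℝ)) (f := atTop).sub this
    simpa using h
  apply tendsto_of_tendsto_of_tendsto_of_le_of_le' h1 tendsto_const_nhds
  · filter_upwards [eventually_ge_atTop (2 : ℝ)] with z hz
    rw [tail_formula]
    have := tail_le_exp hz
    linarith
  · exact Eventually.of_forall cdf_le_one


lemma pdf_hasDeriv (x : ℝ) : HasDerivAt stdNormalPdf (-x * stdNormalPdf x) x := by
  have h0 : HasDerivAt (fun x : ℝ => -x ^ 2 / 2) (-x) x := by
    have := ((hasDerivAt_pow 2 x).neg).div_const 2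
    refine this.congr_deriv ?_
    norm_num
    ring
  have h1 := (h0.exp).const_mul ((Real.sqrt (2 * π))⁻¹)
  have he : stdNormalPdf = fun x => (Real.sqrt (2 * π))⁻¹ * Real.exp (-x ^ 2 / 2) :=
    funext pdf_def'
  rw [he]
  refine h1.congr_deriv ?_
  beta_reduce
  ring

lemma pdf_tendsto_top : Tendsto stdNormalPdf atTop (nhds 0) := by
  apply tendsto_of_tendsto_of_tendsto_of_le_of_le' tendsto_const_nhds
    Real.tendsto_exp_neg_atTop_nhds_zero
  · exact Eventually.of_forall fun x => (pdf_pos x).le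
  · filter_upwards [eventually_ge_atTop (2 : ℝ)] with x hx
    rw [← pdf_even]
    exact pdf_le_exp (by linarith)

lemma cdf_neg_tendsto : Tendsto (fun x => stdNormalCdf (-x)) atTop (nhds 0) :=
  cdf_tendsto_bot.comp tendsto_neg_atTop_atBot

noncomputable def G (x : ℝ) : ℝ := stdNormalPdf x / x - stdNormalCdf (-x)
noncomputable def H (x : ℝ) : ℝ := stdNormalCdf (-x) - x * stdNormalPdf x / (x ^ 2 + 1)

lemma cdf_neg_hasDeriv (x : ℝ) :
    HasDerivAt (fun x => stdNormalCdf (-x)) (-stdNormalPdf x) x := by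
  have h := (cdf_hasDeriv (-x)).comp x (hasDerivAt_neg x)
  simpa [pdf_even, Function.comp_def] using h

lemma G_hasDeriv {x : ℝ} (hx : x ≠ 0) : HasDerivAt G (-(stdNormalPdf x) / x ^ 2) x := by
  have h1 := (pdf_hasDeriv x).div (hasDerivAt_id x) hx
  have h2 := h1.sub (cdf_neg_hasDeriv x)
  refine h2.congr_deriv ?_
  simp only [id]
  field_simp
  ring

lemma H_hasDeriv {x : ℝ} : HasDerivAt H (-2 * stdNormalPdf x / (x ^ 2 + 1) ^ 2) x := by
  have hv : HasDerivAt (fun x : ℝ => x ^ 2 + 1) (2 * x) x := by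
    simpa using (hasDerivAt_pow 2 x).add_const 1
  have hu : HasDerivAt (fun x : ℝ => x * stdNormalPdf x)
      (1 * stdNormalPdf x + x * (-x * stdNormalPdf x)) x :=
    (hasDerivAt_id x).mul (pdf_hasDeriv x)
  have hne : (x : ℝ) ^ 2 + 1 ≠ 0 := by positivity
  have h1 := hu.div hv hne
  have h2 := (cdf_neg_hasDeriv x).sub h1
  refine h2.congr_deriv ?_
  field_simp
  ring

lemma G_tendsto : Tendsto G atTop (nhds 0) := by
  have h1 : Tendsto (fun x => stdNormalPdf x / x) atTop (nhds 0) := by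
    apply tendsto_of_tendsto_of_tendsto_of_le_of_le' tendsto_const_nhds pdf_tendsto_top
    · filter_upwards [eventually_ge_atTop (1 : ℝ)] with x hx
      exact div_nonneg (pdf_pos x).le (by linarith)
    · filter_upwards [eventually_ge_atTop (1 : ℝ)] with x hx
      rw [div_le_iff₀ (by linarith)]
      nlinarith [pdf_pos x]
  have := h1.sub cdf_neg_tendsto
  simp at this
  exact this

lemma H_tendsto : Tendsto H atTop (nhds 0) := by
  have h1 : Tendsto (fun x => x * stdNormalPdf x / (x ^ 2 + 1)) atTop (nhds 0) := by
    apply tendsto_of_tendsto_of_tendsto_of_le_of_le' tendsto_const_nhds pdf_tendsto_top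
    · filter_upwards [eventually_ge_atTop (1 : ℝ)] with x hx
      exact div_nonneg (mul_nonneg (by linarith) (pdf_pos x).le) (by positivity)
    · filter_upwards [eventually_ge_atTop (1 : ℝ)] with x hx
      rw [div_le_iff₀ (by positivity)]
      nlinarith [pdf_pos x, sq_nonneg (x - 1)]
  have := cdf_neg_tendsto.sub h1
  simp at this
  exact this

lemma G_antitone : AntitoneOn G (Ici 1) := by
  apply antitoneOn_of_deriv_nonpos (convex_Ici 1)
  · intro x hx
    exact (G_hasDeriv (by simp at hx; linarith)).continuousAt.continuousWithinAt
  · intro x hx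
    rw [interior_Ici] at hx
    exact (G_hasDeriv (by simp at hx; linarith)).differentiableAt.differentiableWithinAt
  · intro x hx
    rw [interior_Ici] at hx
    rw [(G_hasDeriv (by simp at hx; linarith)).deriv]
    have := pdf_pos x
    have : (0:ℝ) < x ^ 2 := by simp at hx; positivity
    apply div_nonpos_of_nonpos_of_nonneg
    · linarith [pdf_pos x]
    · linarith

lemma H_antitone : AntitoneOn H (Ici 1) := by
  apply antitoneOn_of_deriv_nonpos (convex_Ici 1)
  · exact fun x _ => (H_hasDeriv).continuousAt.continuousWithinAt
  · exact fun x _ => (H_hasDeriv).differentiableAt.differentiableWithinAt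
  · intro x hx
    rw [H_hasDeriv.deriv]
    apply div_nonpos_of_nonpos_of_nonneg
    · linarith [pdf_pos x]
    · positivity

lemma mills_upper {x : ℝ} (hx : 1 ≤ x) : stdNormalCdf (-x) ≤ stdNormalPdf x / x := by
  have h0 : (0:ℝ) ≤ G x := by
    apply le_of_tendsto G_tendsto
    filter_upwards [eventually_ge_atTop x] with y hy
    exact G_antitone hx (le_trans hx hy) hy
  simp only [G] at h0
  linarith

lemma mills_lower {x : ℝ} (hx : 1 ≤ x) :
    x * stdNormalPdf x / (x ^ 2 + 1) ≤ stdNormalCdf (-x) := by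
  have h0 : (0:ℝ) ≤ H x := by
    apply le_of_tendsto H_tendsto
    filter_upwards [eventually_ge_atTop x] with y hy
    exact H_antitone hx (le_trans hx hy) hy
  simp only [H] at h0
  linarith

lemma skew_integrand_integrable (l : ℝ) :
    Integrable (fun t => 2 * stdNormalPdf t * stdNormalCdf (l * t)) := by
  apply (pdf_integrable.const_mul 2).mono
  · exact ((pdf_cont.measurable.const_mul 2).mul
      (cdf_mono.measurable.comp (measurable_id.const_mul l))).aestronglyMeasurable
  · apply Eventually.of_forall
    intro t
    have h1 := pdf_pos t
    have h2 := cdf_nonneg (l * t)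
    have h3 := cdf_le_one (l * t)
    rw [Real.norm_eq_abs, Real.norm_eq_abs, abs_of_nonneg (by positivity),
      abs_of_nonneg (by positivity)]
    nlinarith

lemma sk_upper (l z : ℝ) : skewNormalCdf l z ≤ 2 * stdNormalCdf z := by
  have h : skewNormalCdf l z ≤ ∫ t in Set.Iic z, 2 * stdNormalPdf t := by
    apply setIntegral_mono_on (skew_integrand_integrable l).integrableOn
      ((pdf_integrable.const_mul 2).integrableOn) measurableSet_Iic
    intro t _
    have h1 := pdf_pos t
    have h3 := cdf_le_one (l * t)
    nlinarith
  rwa [MeasureTheory.integral_const_mul, ← cdf_def] at h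

lemma sk_lower {l : ℝ} (hl : l < 0) (z : ℝ) :
    2 * stdNormalCdf (l * z) * stdNormalCdf z ≤ skewNormalCdf l z := by
  have h : (∫ t in Set.Iic z, 2 * stdNormalCdf (l * z) * stdNormalPdf t) ≤ skewNormalCdf l z := by
    apply setIntegral_mono_on
      ((pdf_integrable.const_mul _).integrableOn)
      (skew_integrand_integrable l).integrableOn measurableSet_Iic
    intro t ht
    have h1 := pdf_pos t
    have h2 : stdNormalCdf (l * z) ≤ stdNormalCdf (l * t) := by
      apply cdf_mono
      have : t ≤ z := ht
      nlinarith
    nlinarith [cdf_nonneg (l * z)]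
  rwa [MeasureTheory.integral_const_mul, ← cdf_def] at h

lemma lz_tendsto {l : ℝ} (hl : l < 0) : Tendsto (fun z => l * z) atBot atTop :=
  (tendsto_const_mul_atTop_of_neg hl).2 tendsto_id

lemma sq_tendsto : Tendsto (fun z : ℝ => z ^ 2) atBot atTop := by
  have h : Tendsto (fun z : ℝ => (-z) ^ 2) atBot atTop :=
    (tendsto_pow_atTop two_ne_zero).comp tendsto_neg_atBot_atTop
  simpa [neg_sq] using h

lemma ratio_sq_tendsto : Tendsto (fun z : ℝ => z ^ 2 / (z ^ 2 + 1)) atBot (nhds 1) := by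
  have h0 : Tendsto (fun y : ℝ => y / (y + 1)) atTop (nhds 1) := by
    have h1 : Tendsto (fun y : ℝ => 1 - (y + 1)⁻¹) atTop (nhds 1) := by
      have h2 := tendsto_inv_atTop_zero.comp (tendsto_atTop_add_const_right atTop (1:ℝ) tendsto_id)
      simpa using (tendsto_const_nhds (x := (1:ℝ)) (f := atTop)).sub h2
    apply h1.congr'
    filter_upwards [eventually_ge_atTop (1 : ℝ)] with y hy
    field_simp
    ring
  exact h0.comp sq_tendsto

lemma lower_tendsto {l : ℝ} (hl : l < 0) :
    Tendsto (fun z => stdNormalCdf (l * z) * (z ^ 2 / (z ^ 2 + 1))) atBot (nhds 1) := by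
  have h1 := cdf_tendsto_top.comp (lz_tendsto hl)
  simpa using h1.mul ratio_sq_tendsto

lemma hsqrt2 : Real.sqrt (2 / π) = 2 * (Real.sqrt (2 * π))⁻¹ := by
  have hpos : (0:ℝ) < Real.sqrt (2 * π) := by positivity
  rw [eq_mul_inv_iff_mul_eq₀ hpos.ne']
  rw [← Real.sqrt_mul (by positivity)]
  rw [show (2 / π) * (2 * π) = 4 by field_simp; ring]
  rw [show (4:ℝ) = 2 ^ 2 by norm_num, Real.sqrt_sq (by norm_num)]

lemma den_eq {x : ℝ} (hx : 0 < x) :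
    Real.sqrt (2 / π) * |(-x)|⁻¹ * Real.exp (-(-x) ^ 2 / 2) = 2 * stdNormalPdf x / x := by
  rw [abs_neg, abs_of_pos hx, hsqrt2, pdf_def' x, neg_sq]
  ring

lemma ub {l x : ℝ} (hx : 1 ≤ x) : skewNormalCdf l (-x) ≤ 2 * stdNormalPdf x / x := by
  have h1 := sk_upper l (-x)
  have h2 := mills_upper hx
  calc skewNormalCdf l (-x) ≤ 2 * stdNormalCdf (-x) := h1
    _ ≤ 2 * (stdNormalPdf x / x) := by linarith
    _ = 2 * stdNormalPdf x / x := by ring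

lemma lb {l x : ℝ} (hl : l < 0) (hx : 1 ≤ x) :
    2 * stdNormalCdf (l * -x) * (x * stdNormalPdf x / (x ^ 2 + 1)) ≤ skewNormalCdf l (-x) := by
  have h1 := sk_lower hl (-x)
  have h2 := mills_lower hx
  have h3 := cdf_nonneg (l * -x)
  calc 2 * stdNormalCdf (l * -x) * (x * stdNormalPdf x / (x ^ 2 + 1))
      ≤ 2 * stdNormalCdf (l * -x) * stdNormalCdf (-x) :=
        mul_le_mul_of_nonneg_left h2 (by linarith)
    _ ≤ skewNormalCdf l (-x) := h1

/-- For l < 0, F(z) ~ √(2/π) |z|⁻¹ e^{-z²/2} as z → -∞ (twice the standard normal tail). -/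
theorem skewNormalCdf_tail_equiv_neg (l : ℝ) (hl : l < 0) :
    Tendsto (fun z : ℝ =>
      skewNormalCdf l z /
        (Real.sqrt (2 / π) * |z|⁻¹ * Real.exp (-z ^ 2 / 2)))
      atBot (nhds 1) := by
  apply tendsto_of_tendsto_of_tendsto_of_le_of_le' (lower_tendsto hl) tendsto_const_nhds
  · filter_upwards [eventually_le_atBot (-1 : ℝ)] with z hz
    obtain ⟨x, rfl⟩ : ∃ x, z = -x := ⟨-z, by ring⟩
    have hx1 : 1 ≤ x := by linarith
    have hxpos : (0:ℝ) < x := by linarith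
    have hP := pdf_pos x
    rw [den_eq hxpos, le_div_iff₀ (by positivity)]
    have key := lb hl hx1
    have heq : stdNormalCdf (l * -x) * ((-x) ^ 2 / ((-x) ^ 2 + 1)) * (2 * stdNormalPdf x / x)
        = 2 * stdNormalCdf (l * -x) * (x * stdNormalPdf x / (x ^ 2 + 1)) := by
      rw [neg_sq]
      field_simp
    rw [heq]
    exact key
  · filter_upwards [eventually_le_atBot (-1 : ℝ)] with z hz
    obtain ⟨x, rfl⟩ : ∃ x, z = -x := ⟨-z, by ring⟩
    have hx1 : 1 ≤ x := by linarith
    have hxpos : (0:ℝ) < x := by linarith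
    have hP := pdf_pos x
    rw [den_eq hxpos, div_le_one (by positivity)]
    exact ub hx1
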